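/- Let c be a conjugacy class of S_n whose elements have c cycles in total (counting fixed points), and let λ be a partition of n. Then |χ_λ(c)| ≤ (2·sq(λ))^c. -/

import Mathlib

/-- `l` represents a partition of `n` (0-indexed parts). -/
def IsPartitionFun (n : ℕ) (l : ℕ → ℕ) : Prop :=
  Antitone l ∧ (∀ i, n ≤ i → l i = 0) ∧ ∑ i ∈ Finset.range n, l i = n

/-- side of largest square in the Ferrers diagram: largest `j` with `λ_j ≥ j`. -/
def sqSide (n : ℕ) (l : ℕ → ℕ) : ℕ :=
  Nat.findGreatest (fun j => 0 < j ∧ j ≤ l (j - 1)) n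

/-- `ν` is obtained from the partition `μ` of `m` by removing a rim hook (border strip)
of size `k`: `ν ⊆ μ` is a partition of `m - k`, exactly `k` cells are removed, the rows
touched by the removed cells form an interval, and the removed skew shape contains no
`2 × 2` square while being connected (for consecutive touched rows `i`, `i+1` we have
`ν_i = μ_{i+1} - 1`). -/
def IsRimHookRemoval (m : ℕ) (μ ν : ℕ → ℕ) (k : ℕ) : Prop :=
  IsPartitionFun m μ ∧ IsPartitionFun (m - k) ν ∧ (∀ i, ν i ≤ μ i) ∧
  (∑ i ∈ Finset.range m, (μ i - ν i) = k) ∧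
  (∀ i j l, i ≤ l → l ≤ j → ν i < μ i → ν j < μ j → ν l < μ l) ∧
  (∀ i, ν i < μ i → ν (i + 1) < μ (i + 1) → ν i + 1 = μ (i + 1))

/-- the leg length of the rim hook removed in passing from `μ` to `ν`:
one less than the number of rows it occupies. -/
def legLength (m : ℕ) (μ ν : ℕ → ℕ) : ℕ :=
  ((Finset.range m).filter fun i => ν i < μ i).card - 1

noncomputable def topRow (μ ν : ℕ → ℕ) : ℕ := sInf {i | ν i < μ i}
noncomputable def botRow (μ ν : ℕ → ℕ) : ℕ := sSup {i | ν i < μ i}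

private lemma telescope (f g : ℕ → ℤ) (a : ℕ) : ∀ b, a ≤ b →
    (∀ i, a ≤ i → i < b → g i + 1 = f (i + 1)) →
    (∑ i ∈ Finset.Icc a b, (f i - g i)) = f a + b - a - g b := by
  refine Nat.le_induction ?_ ?_
  · intro _
    simp [Finset.Icc_self]
  · intro b hab ih hstep
    rw [Finset.sum_Icc_succ_top (by omega), ih (fun i h1 h2 => hstep i h1 (by omega))]
    have := hstep b hab (by omega)
    push_cast
    linarith

private lemma rim_facts {m k : ℕ} {μ ν : ℕ → ℕ}
    (hrh : IsRimHookRemoval m μ ν k) (hk : 1 ≤ k) :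
    topRow μ ν ≤ botRow μ ν ∧
    ν (topRow μ ν) < μ (topRow μ ν) ∧
    ν (botRow μ ν) < μ (botRow μ ν) ∧
    botRow μ ν < m ∧
    (∀ i, i < topRow μ ν ∨ botRow μ ν < i → ν i = μ i) ∧
    (∀ i, topRow μ ν ≤ i → i < botRow μ ν → ν i + 1 = μ (i + 1)) ∧
    ((k : ℤ) = (μ (topRow μ ν) : ℤ) + botRow μ ν - topRow μ ν - ν (botRow μ ν)) ∧
    μ (botRow μ ν + 1) ≤ ν (botRow μ ν) := by
  obtain ⟨hμ, hν, hle, hsum, hconv, hstep⟩ := hrh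
  have hlt_m : ∀ i ∈ {i | ν i < μ i}, i < m := by
    intro i hi
    by_contra h
    have h0 : μ i = 0 := hμ.2.1 i (by omega)
    have : ν i < μ i := hi
    omega
  have hne : {i | ν i < μ i}.Nonempty := by
    by_contra h
    rw [Set.not_nonempty_iff_eq_empty] at h
    have hz : ∀ i ∈ Finset.range m, μ i - ν i = 0 := by
      intro i _
      have : i ∉ ({i | ν i < μ i} : Set ℕ) := by rw [h]; exact Set.notMem_empty i
      have : ¬ ν i < μ i := this
      omega
    rw [Finset.sum_eq_zero hz] at hsum
    omega
  have hbdd : BddAbove {i | ν i < μ i} := ⟨m, fun i hi => (hlt_m i hi).le⟩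
  have h0mem : ν (topRow μ ν) < μ (topRow μ ν) := Nat.sInf_mem hne
  have h1mem : ν (botRow μ ν) < μ (botRow μ ν) := Nat.sSup_mem hne hbdd
  have h01 : topRow μ ν ≤ botRow μ ν := csInf_le_csSup hne ⟨0, fun i _ => Nat.zero_le i⟩ hbdd
  have hbm : botRow μ ν < m := hlt_m _ h1mem
  have hout : ∀ i, i < topRow μ ν ∨ botRow μ ν < i → ν i = μ i := by
    intro i hi
    have : ¬ ν i < μ i := by
      intro hmem
      rcases hi with hi | hi
      · have h' : topRow μ ν ≤ i := Nat.sInf_le hmem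
        omega
      · have h' : i ≤ botRow μ ν := le_csSup hbdd hmem
        omega
    have := hle i
    omega
  have hbetween : ∀ i, topRow μ ν ≤ i → i ≤ botRow μ ν → ν i < μ i :=
    fun i h1 h2 => hconv _ _ i h1 h2 h0mem h1mem
  have hstep' : ∀ i, topRow μ ν ≤ i → i < botRow μ ν → ν i + 1 = μ (i + 1) :=
    fun i h1 h2 => hstep i (hbetween i h1 (by omega)) (hbetween (i+1) (by omega) (by omega))
  have hj : μ (botRow μ ν + 1) ≤ ν (botRow μ ν) := by
    have h1 : ν (botRow μ ν + 1) = μ (botRow μ ν + 1) := hout _ (Or.inr (by omega))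
    have h2 : ν (botRow μ ν + 1) ≤ ν (botRow μ ν) := hν.1 (by omega)
    omega
  refine ⟨h01, h0mem, h1mem, hbm, hout, hstep', ?_, hj⟩
  have hIcc : Finset.Icc (topRow μ ν) (botRow μ ν) ⊆ Finset.range m := by
    intro i hi
    rw [Finset.mem_Icc] at hi
    exact Finset.mem_range.2 (by omega)
  have hsum2 : ∑ i ∈ Finset.Icc (topRow μ ν) (botRow μ ν), (μ i - ν i) = k := by
    rw [← hsum]
    refine Finset.sum_subset hIcc ?_
    intro i _ hni
    rw [Finset.mem_Icc] at hni
    have := hout i (by omega)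
    omega
  have hcast : (k : ℤ) = ∑ i ∈ Finset.Icc (topRow μ ν) (botRow μ ν), ((μ i : ℤ) - ν i) := by
    rw [← hsum2, Nat.cast_sum]
    exact Finset.sum_congr rfl fun i _ => Nat.cast_sub (hle i)
  rw [hcast]
  exact telescope _ _ _ _ h01 (fun i h1 h2 => by exact_mod_cast hstep' i h1 h2)

private lemma eq_of_topRow {m k : ℕ} {μ ν ν' : ℕ → ℕ}
    (hrh : IsRimHookRemoval m μ ν k) (hrh' : IsRimHookRemoval m μ ν' k) (hk : 1 ≤ k)
    (h : topRow μ ν = topRow μ ν') : ν = ν' := by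
  obtain ⟨h01, h0, h1, hbm, hout, hstep, hsum, hj⟩ := rim_facts hrh hk
  obtain ⟨h01', h0', h1', hbm', hout', hstep', hsum', hj'⟩ := rim_facts hrh' hk
  have hmono : Antitone μ := hrh.1.1
  -- first: botRow μ ν = botRow μ ν'
  have hbot : botRow μ ν = botRow μ ν' := by
    rcases lt_trichotomy (botRow μ ν) (botRow μ ν') with hlt | he | hlt
    · exfalso
      have e1 : μ (botRow μ ν') ≤ μ (botRow μ ν + 1) := hmono (by omega)
      rw [h] at hsum
      omega
    · exact he
    · exfalso
      have e1 : μ (botRow μ ν) ≤ μ (botRow μ ν' + 1) := hmono (by omega)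
      rw [h] at hsum
      omega
  have hvb : ν (botRow μ ν) = ν' (botRow μ ν) := by
    rw [h] at hsum
    rw [hbot] at hsum ⊢
    omega
  funext i
  rcases lt_or_ge i (topRow μ ν) with hc | hc
  · rw [hout i (Or.inl hc), hout' i (Or.inl (h ▸ hc))]
  rcases lt_or_ge (botRow μ ν) i with hc2 | hc2
  · rw [hout i (Or.inr hc2), hout' i (Or.inr (hbot ▸ hc2))]
  rcases eq_or_lt_of_le hc2 with hc3 | hc3
  · rw [hc3]
    exact hvb
  · have e1 := hstep i hc (by omega)
    have e2 := hstep' i (h ▸ hc) (by rw [← hbot]; omega)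
    omega

private lemma eq_of_botCol {m k : ℕ} {μ ν ν' : ℕ → ℕ}
    (hrh : IsRimHookRemoval m μ ν k) (hrh' : IsRimHookRemoval m μ ν' k) (hk : 1 ≤ k)
    (h : ν (botRow μ ν) = ν' (botRow μ ν')) : ν = ν' := by
  obtain ⟨h01, h0, h1, hbm, hout, hstep, hsum, hj⟩ := rim_facts hrh hk
  obtain ⟨h01', h0', h1', hbm', hout', hstep', hsum', hj'⟩ := rim_facts hrh' hk
  have hmono : Antitone μ := hrh.1.1
  have hbot : botRow μ ν = botRow μ ν' := by
    rcases lt_trichotomy (botRow μ ν) (botRow μ ν') with hlt | he | hlt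
    · exfalso
      have e1 : μ (botRow μ ν') ≤ μ (botRow μ ν + 1) := hmono (by omega)
      omega
    · exact he
    · exfalso
      have e1 : μ (botRow μ ν) ≤ μ (botRow μ ν' + 1) := hmono (by omega)
      omega
  rw [hbot] at hsum h
  have htop : topRow μ ν = topRow μ ν' := by
    rcases lt_trichotomy (topRow μ ν) (topRow μ ν') with hlt | he | hlt
    · exfalso
      have e1 : μ (topRow μ ν') ≤ μ (topRow μ ν) := hmono (by omega)
      omega
    · exact he
    · exfalso
      have e1 : μ (topRow μ ν) ≤ μ (topRow μ ν') := hmono (by omega)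
      omega
  exact eq_of_topRow hrh hrh' hk htop

private lemma rim_card {n m k : ℕ} {lam μ : ℕ → ℕ} (hlam : IsPartitionFun n lam)
    (hsub : ∀ i, μ i ≤ lam i) (hk : 1 ≤ k) :
    ∃ hfin : {ν | IsRimHookRemoval m μ ν k}.Finite,
      hfin.toFinset.card ≤ 2 * sqSide n lam := by
  set sq := sqSide n lam with hsq
  set S := {ν | IsRimHookRemoval m μ ν k} with hS
  set Φ : (ℕ → ℕ) → ℕ :=
    fun ν => if topRow μ ν < sq then topRow μ ν else sq + ν (botRow μ ν) with hΦ
  have hcol : ∀ ν ∈ S, sq ≤ topRow μ ν → ν (botRow μ ν) < sq := by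
    intro ν hν hge
    have hrh : IsRimHookRemoval m μ ν k := hν
    obtain ⟨h01, h0, h1, hbm, hout, hstep, hsum, hj⟩ := rim_facts hrh hk
    by_contra hcon
    push_neg at hcon
    have e2 : μ (botRow μ ν) ≤ μ (topRow μ ν) := hrh.1.1 h01
    have e3 : μ (topRow μ ν) ≤ lam (topRow μ ν) := hsub _
    have e4 : lam (topRow μ ν) ≤ lam sq := hlam.1 hge
    have e5 : sq + 1 ≤ lam sq := by omega
    have e6 : sq < n := by
      by_contra hn
      have := hlam.2.1 sq (by omega)
      omega
    have e7 : sq + 1 ≤ sq := by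
      conv_rhs => rw [hsq]
      exact Nat.le_findGreatest (by omega)
        ⟨by omega, by simp only [Nat.add_sub_cancel]; exact e5⟩
    omega
  have hinj : Set.InjOn Φ S := by
    intro ν hν ν' hν' he
    simp only [hΦ] at he
    by_cases c1 : topRow μ ν < sq <;> by_cases c2 : topRow μ ν' < sq
    · rw [if_pos c1, if_pos c2] at he
      exact eq_of_topRow hν hν' hk he
    · rw [if_pos c1, if_neg c2] at he
      omega
    · rw [if_neg c1, if_pos c2] at he
      omega
    · rw [if_neg c1, if_neg c2] at he
      exact eq_of_botCol hν hν' hk (by omega)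
  have hmaps : ∀ ν ∈ S, Φ ν ∈ Finset.range (2 * sq) := by
    intro ν hν
    rw [Finset.mem_range]
    simp only [hΦ]
    split
    · have : topRow μ ν < sq := by assumption
      omega
    · have hge : sq ≤ topRow μ ν := by omega
      have := hcol ν hν hge
      omega
  have hfin : S.Finite := by
    have himg : (Φ '' S).Finite :=
      Set.Finite.subset (Finset.range (2*sq)).finite_toSet
        (by rintro _ ⟨ν, hν, rfl⟩; exact hmaps ν hν)
    exact Set.Finite.of_finite_image himg hinj
  refine ⟨hfin, ?_⟩
  have hcard := Finset.card_le_card_of_injOn Φ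
    (fun a ha => hmaps a (hfin.mem_toFinset.mp ha))
    (by rw [Set.Finite.coe_toFinset]; exact hinj)
  simpa using hcard

/-- let `c` be a conjugacy class of `S_n` whose elements have `c` cycles
in total (its cycle type `ρ` is a multiset of `c` positive integers summing to `n`),
and let `λ ⊢ n`.  For any family `F` assigning to each partition and cycle type an
integer, satisfying the normalization `F ∅ ∅ = 1` and the Murnaghan–Nakayama rule
(so that `F λ ρ = χ_λ(c)`), we have `|χ_λ(c)| ≤ (2 · sq(λ))^c`. -/
theorem stmt3 (n c : ℕ) (lam : ℕ → ℕ) (hlam : IsPartitionFun n lam)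
    (F : (ℕ → ℕ) → Multiset ℕ → ℤ)
    (hbase : F (fun _ => 0) 0 = 1)
    (hMN : ∀ (m : ℕ) (μ : ℕ → ℕ) (ρ : Multiset ℕ) (k : ℕ),
      IsPartitionFun m μ → k ∈ ρ →
      F μ ρ = ∑ᶠ ν ∈ {ν : ℕ → ℕ | IsRimHookRemoval m μ ν k},
        (-1 : ℤ) ^ legLength m μ ν * F ν (ρ.erase k))
    (ρ : Multiset ℕ) (hρsum : ρ.sum = n) (hρpos : ∀ k ∈ ρ, 1 ≤ k)
    (hρcard : Multiset.card ρ = c) :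
    |F lam ρ| ≤ ((2 * sqSide n lam : ℕ) : ℤ) ^ c := by
  have key : ∀ (c' : ℕ) (ρ : Multiset ℕ) (m : ℕ) (μ : ℕ → ℕ),
      Multiset.card ρ = c' → IsPartitionFun m μ → (∀ i, μ i ≤ lam i) → ρ.sum = m →
      (∀ k ∈ ρ, 1 ≤ k) → |F μ ρ| ≤ ((2 * sqSide n lam : ℕ) : ℤ) ^ c' := by
    intro c'
    induction c' with
    | zero =>
      intro ρ m μ hcard hμ hsub hsum hpos
      have hρ0 : ρ = 0 := Multiset.card_eq_zero.mp hcard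
      subst hρ0
      have hm : m = 0 := by simpa using hsum.symm
      subst hm
      have hμ0 : μ = fun _ => 0 := funext fun i => hμ.2.1 i (Nat.zero_le i)
      rw [hμ0, hbase]
      simp
    | succ c' ih =>
      intro ρ m μ hcard hμ hsub hsum hpos
      have hne : ρ ≠ 0 := by
        intro h
        rw [h] at hcard
        simp at hcard
      obtain ⟨k, hkmem⟩ := Multiset.exists_mem_of_ne_zero hne
      obtain ⟨ρ', rfl⟩ := Multiset.exists_cons_of_mem hkmem
      have hk1 : 1 ≤ k := hpos k (Multiset.mem_cons_self _ _)
      have hc' : Multiset.card ρ' = c' := by simpa using hcard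
      have hsum' : k + ρ'.sum = m := by rw [← hsum]; simp
      rw [hMN m μ _ k hμ (Multiset.mem_cons_self _ _), Multiset.erase_cons_head]
      obtain ⟨hfin, hcardle⟩ := rim_card (m := m) hlam hsub hk1
      rw [finsum_mem_eq_finite_toFinset_sum _ hfin]
      set B : ℤ := ((2 * sqSide n lam : ℕ) : ℤ) with hB
      have hBnn : (0:ℤ) ≤ B := by rw [hB]; exact Int.natCast_nonneg _
      have hterm : ∀ ν ∈ hfin.toFinset, |(-1:ℤ) ^ legLength m μ ν * F ν ρ'| ≤ B ^ c' := by
        intro ν hν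
        have hrh : IsRimHookRemoval m μ ν k := hfin.mem_toFinset.mp hν
        rw [abs_mul, abs_pow, abs_neg, abs_one, one_pow, one_mul]
        exact ih ρ' (m - k) ν hc' hrh.2.1
          (fun i => (hrh.2.2.1 i).trans (hsub i)) (by omega)
          (fun j hj => hpos j (Multiset.mem_cons_of_mem hj))
      calc |∑ ν ∈ hfin.toFinset, (-1:ℤ) ^ legLength m μ ν * F ν ρ'|
          ≤ ∑ ν ∈ hfin.toFinset, |(-1:ℤ) ^ legLength m μ ν * F ν ρ'| :=
            Finset.abs_sum_le_sum_abs _ _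
        _ ≤ hfin.toFinset.card • (B ^ c') := Finset.sum_le_card_nsmul _ _ _ hterm
        _ = (hfin.toFinset.card : ℤ) * B ^ c' := nsmul_eq_mul _ _
        _ ≤ B * B ^ c' := by
            apply mul_le_mul_of_nonneg_right _ (pow_nonneg hBnn _)
            rw [hB]
            exact_mod_cast hcardle
        _ = B ^ (c' + 1) := by rw [pow_succ]; ring
  exact key c ρ n lam hρcard hlam (fun i => le_rfl) hρsum hρpos
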